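/- Let J be an antiunitary involution on H and {e_n} an orthonormal basis with J e_n = e_n. Then a bounded T on H⊗H is J-crossable if and only if there is c > 0 such that |Σ_{i,j,k,l} a_{ij} T^{jl}_{ik} b_{kl}| ≤ c ‖a‖_{ℓ²} ‖b‖_{ℓ²} for all a, b ∈ ℓ²(ℕ²), where T^{jl}_{ik} = ⟨e_j⊗e_l, T(e_i⊗e_k)⟩; moreover in this case Cross_J(T)^{ij}_{kl} = T^{jl}_{ik}. -/

import Mathlib

noncomputable section
open scoped InnerProductSpace ComplexConjugate

variable {H K : Type*}

/-- A realization of the Hilbert space tensor square of `H` on a Hilbert space `K`. -/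
structure TensorSquare (H K : Type*) [NormedAddCommGroup H] [InnerProductSpace ℂ H]
    [NormedAddCommGroup K] [InnerProductSpace ℂ K] : Type _ where
  tmul : H → H → K
  tmul_add_left : ∀ a a' b, tmul (a + a') b = tmul a b + tmul a' b
  tmul_add_right : ∀ a b b', tmul a (b + b') = tmul a b + tmul a b'
  tmul_smul_left : ∀ (c : ℂ) a b, tmul (c • a) b = c • tmul a b
  tmul_smul_right : ∀ (c : ℂ) a b, tmul a (c • b) = c • tmul a b
  inner_tmul : ∀ a b c d, ⟪tmul a b, tmul c d⟫_ℂ = ⟪a, c⟫_ℂ * ⟪b, d⟫_ℂ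
  dense_span : Dense (↑(Submodule.span ℂ (Set.range fun p : H × H => tmul p.1 p.2)) : Set K)

/-- A densely defined closed antilinear involution `S` on `H`, together with its adjoint `S*`. -/
structure AntiInvolution (H : Type*) [NormedAddCommGroup H] [InnerProductSpace ℂ H] : Type _ where
  dom : Submodule ℂ H
  toFun : H → H
  dense_dom : Dense (dom : Set H)
  map_add : ∀ x ∈ dom, ∀ y ∈ dom, toFun (x + y) = toFun x + toFun y
  map_smul : ∀ (c : ℂ), ∀ x ∈ dom, toFun (c • x) = (starRingEnd ℂ c) • toFun x
  invol_mem : ∀ x ∈ dom, toFun x ∈ dom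
  invol : ∀ x ∈ dom, toFun (toFun x) = x
  closed_graph : IsClosed {p : H × H | p.1 ∈ dom ∧ toFun p.1 = p.2}
  adjDom : Submodule ℂ H
  adjFun : H → H
  dense_adjDom : Dense (adjDom : Set H)
  adj_spec : ∀ y ∈ adjDom, ∀ x ∈ dom, ⟪adjFun y, x⟫_ℂ = ⟪toFun x, y⟫_ℂ
  adj_max : ∀ y z : H, (∀ x ∈ dom, ⟪z, x⟫_ℂ = ⟪toFun x, y⟫_ℂ) → y ∈ adjDom

section
variable [NormedAddCommGroup H] [InnerProductSpace ℂ H]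
  [NormedAddCommGroup K] [InnerProductSpace ℂ K]

/-- The crossing relation (unbounded `S`): `Tc = Cross_S(T)`. -/
def CrossRelU (τ : TensorSquare H K) (S : AntiInvolution H) (T Tc : K →L[ℂ] K) : Prop :=
  ∀ φ₁ ∈ S.dom, ∀ ψ₁ ∈ S.dom, ∀ φ₂ ∈ S.adjDom, ∀ ψ₂ ∈ S.adjDom,
    ⟪τ.tmul φ₁ φ₂, Tc (τ.tmul ψ₁ ψ₂)⟫_ℂ
      = ⟪τ.tmul φ₂ (S.adjFun ψ₂), T (τ.tmul (S.toFun φ₁) ψ₁)⟫_ℂ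

/-- The crossing relation for an everywhere defined (bounded) antilinear involution `S`
with adjoint `Sstar`. -/
def CrossRelB (τ : TensorSquare H K) (S Sstar : H →SL[starRingEnd ℂ] H) (T Tc : K →L[ℂ] K) :
    Prop :=
  ∀ φ₁ φ₂ ψ₁ ψ₂ : H,
    ⟪τ.tmul φ₁ φ₂, Tc (τ.tmul ψ₁ ψ₂)⟫_ℂ = ⟪τ.tmul φ₂ (Sstar ψ₂), T (τ.tmul (S φ₁) ψ₁)⟫_ℂ

end


section MyAux
namespace TensorSquare

variable [NormedAddCommGroup H] [InnerProductSpace ℂ H]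
  [NormedAddCommGroup K] [InnerProductSpace ℂ K]
variable (τ : TensorSquare H K)

lemma norm_tmul (a b : H) : ‖τ.tmul a b‖ = ‖a‖ * ‖b‖ := by
  have h : ‖τ.tmul a b‖ ^ 2 = (‖a‖ * ‖b‖) ^ 2 := by
    rw [@norm_sq_eq_re_inner ℂ, τ.inner_tmul, inner_self_eq_norm_sq_to_K, inner_self_eq_norm_sq_to_K]
    rw [mul_pow]
    norm_cast
  nlinarith [norm_nonneg (τ.tmul a b), norm_nonneg a, norm_nonneg b,
    mul_nonneg (norm_nonneg a) (norm_nonneg b)]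

/-- `tmul` as a continuous bilinear map. -/
def tmulL : H →L[ℂ] H →L[ℂ] K :=
  LinearMap.mkContinuous₂
    (LinearMap.mk₂ ℂ τ.tmul τ.tmul_add_left (fun c a b => τ.tmul_smul_left c a b)
      τ.tmul_add_right (fun c a b => τ.tmul_smul_right c a b)) 1
    (fun a b => by rw [LinearMap.mk₂_apply, norm_tmul, one_mul])

@[simp] lemma tmulL_apply (a b : H) : τ.tmulL a b = τ.tmul a b := rfl

lemma continuous_tmul : Continuous fun p : H × H => τ.tmul p.1 p.2 := by
  have := τ.tmulL.isBoundedBilinearMap.continuous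
  simpa using this

end TensorSquare

section Aux2
variable [NormedAddCommGroup H] [InnerProductSpace ℂ H] [CompleteSpace H]
  [NormedAddCommGroup K] [InnerProductSpace ℂ K] [CompleteSpace K]
variable (τ : TensorSquare H K)

lemma TensorSquare.orthonormal_pair (e : HilbertBasis ℕ ℂ H) :
    Orthonormal ℂ (fun p : ℕ × ℕ => τ.tmul (e p.1) (e p.2)) := by
  rw [orthonormal_iff_ite]
  intro p q
  rw [τ.inner_tmul, orthonormal_iff_ite.mp e.orthonormal, orthonormal_iff_ite.mp e.orthonormal]
  rcases eq_or_ne p q with h | h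
  · simp [h]
  · have : ¬(p.1 = q.1 ∧ p.2 = q.2) := fun hh => h (Prod.ext hh.1 hh.2)
    by_cases h1 : p.1 = q.1 <;> by_cases h2 : p.2 = q.2 <;> simp_all

lemma TensorSquare.tmul_mem_closure (e : HilbertBasis ℕ ℂ H) (a b : H) :
    τ.tmul a b ∈ (Submodule.span ℂ
      (Set.range fun p : ℕ × ℕ => τ.tmul (e p.1) (e p.2))).topologicalClosure := by
  set S := (Submodule.span ℂ
      (Set.range fun p : ℕ × ℕ => τ.tmul (e p.1) (e p.2))).topologicalClosure with hS
  have h1 : ∀ x ∈ Submodule.span ℂ (Set.range e), ∀ y ∈ Submodule.span ℂ (Set.range e),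
      τ.tmul x y ∈ S := by
    intro x hx
    induction hx using Submodule.span_induction with
    | mem x hx =>
      intro y hy
      induction hy using Submodule.span_induction with
      | mem y hy =>
        obtain ⟨i, rfl⟩ := hx
        obtain ⟨j, rfl⟩ := hy
        exact Submodule.le_topologicalClosure _
          (Submodule.subset_span ⟨(i, j), rfl⟩)
      | zero =>
        have : τ.tmul x (0 : H) = 0 := by
          have := τ.tmul_smul_right 0 x 0
          simpa using this
        rw [this]; exact S.zero_mem
      | add y z _ _ hy hz => rw [τ.tmul_add_right]; exact S.add_mem hy hz
      | smul c y _ hy => rw [τ.tmul_smul_right]; exact S.smul_mem c hy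
    | zero =>
      intro y _
      have : τ.tmul (0 : H) y = 0 := by
        have := τ.tmul_smul_left 0 0 y
        simpa using this
      rw [this]; exact S.zero_mem
    | add x z _ _ hx hz =>
      intro y hy
      rw [τ.tmul_add_left]; exact S.add_mem (hx y hy) (hz y hy)
    | smul c x _ hx =>
      intro y hy
      rw [τ.tmul_smul_left]; exact S.smul_mem c (hx y hy)
  -- extend by continuity
  have hclosed : IsClosed {p : H × H | τ.tmul p.1 p.2 ∈ S} :=
    IsClosed.preimage τ.continuous_tmul (Submodule.isClosed_topologicalClosure _)
  have hdense : Dense ((Submodule.span ℂ (Set.range e) : Set H) ×ˢ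
      (Submodule.span ℂ (Set.range e) : Set H)) := by
    have hd : Dense (Submodule.span ℂ (Set.range e) : Set H) := by
      have := e.dense_span
      rw [Submodule.dense_iff_topologicalClosure_eq_top]
      exact this
    exact hd.prod hd
  have : ∀ p : H × H, p ∈ {p : H × H | τ.tmul p.1 p.2 ∈ S} := by
    intro p
    have hsub : ((Submodule.span ℂ (Set.range e) : Set H) ×ˢ
        (Submodule.span ℂ (Set.range e) : Set H)) ⊆ {p : H × H | τ.tmul p.1 p.2 ∈ S} := by
      rintro ⟨x, y⟩ ⟨hx, hy⟩
      exact h1 x hx y hy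
    have := hclosed.closure_subset_iff.mpr hsub
    exact this (hdense.closure_eq ▸ Set.mem_univ p)
  exact this (a, b)

/-- The product Hilbert basis of `K`. -/
def TensorSquare.pairBasis (e : HilbertBasis ℕ ℂ H) : HilbertBasis (ℕ × ℕ) ℂ K :=
  HilbertBasis.mk (τ.orthonormal_pair e) (by
    show ⊤ ≤ (Submodule.span ℂ (Set.range fun p : ℕ × ℕ =>
      τ.tmul (e p.1) (e p.2))).topologicalClosure
    have hsub : (Submodule.span ℂ
        (Set.range fun p : H × H => τ.tmul p.1 p.2) : Set K) ⊆
        ((Submodule.span ℂ (Set.range fun p : ℕ × ℕ =>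
          τ.tmul (e p.1) (e p.2))).topologicalClosure : Set K) := by
      intro x hx
      induction hx using Submodule.span_induction with
      | mem x hx =>
        obtain ⟨⟨a, b⟩, rfl⟩ := hx
        exact τ.tmul_mem_closure e a b
      | zero => exact Submodule.zero_mem _
      | add x y _ _ hx hy => exact Submodule.add_mem _ hx hy
      | smul c x _ hx => exact Submodule.smul_mem _ c hx
    have hd := τ.dense_span.mono hsub
    intro x _
    have hx : x ∈ closure (((Submodule.span ℂ (Set.range fun p : ℕ × ℕ =>
        τ.tmul (e p.1) (e p.2))).topologicalClosure : Set K)) := hd x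
    rwa [(Submodule.isClosed_topologicalClosure _).closure_eq] at hx)

@[simp] lemma TensorSquare.pairBasis_apply (e : HilbertBasis ℕ ℂ H) (p : ℕ × ℕ) :
    τ.pairBasis e p = τ.tmul (e p.1) (e p.2) := by
  rw [TensorSquare.pairBasis]
  exact congrFun (HilbertBasis.coe_mk _ _) p

end Aux2



section Aux3
variable [NormedAddCommGroup H] [InnerProductSpace ℂ H] [CompleteSpace H]
  [NormedAddCommGroup K] [InnerProductSpace ℂ K] [CompleteSpace K]

/-- Two continuous maps agreeing on a Hilbert basis and compatible with the module structure
(up to a multiplicative character `χ`) agree everywhere. -/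
lemma HilbertBasis.ext_dense (e : HilbertBasis ℕ ℂ H) {g₁ g₂ : H → ℂ} (χ : ℂ → ℂ)
    (h₁ : Continuous g₁) (h₂ : Continuous g₂)
    (hadd₁ : ∀ x y, g₁ (x + y) = g₁ x + g₁ y) (hadd₂ : ∀ x y, g₂ (x + y) = g₂ x + g₂ y)
    (hsmul₁ : ∀ (c : ℂ) x, g₁ (c • x) = χ c * g₁ x)
    (hsmul₂ : ∀ (c : ℂ) x, g₂ (c • x) = χ c * g₂ x)
    (hbasis : ∀ n, g₁ (e n) = g₂ (e n)) (x : H) : g₁ x = g₂ x := by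
  have hspan : ∀ y ∈ Submodule.span ℂ (Set.range e), g₁ y = g₂ y := by
    intro y hy
    induction hy using Submodule.span_induction with
    | mem y hy => obtain ⟨n, rfl⟩ := hy; exact hbasis n
    | zero =>
      have z₁ : g₁ 0 = 0 := by
        have := hadd₁ 0 0
        simpa using this.symm
      have z₂ : g₂ 0 = 0 := by
        have := hadd₂ 0 0
        simpa using this.symm
      rw [z₁, z₂]
    | add y z _ _ hy hz => rw [hadd₁, hadd₂, hy, hz]
    | smul c y _ hy => rw [hsmul₁, hsmul₂, hy]
  have hd : Dense (Submodule.span ℂ (Set.range e) : Set H) := by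
    rw [Submodule.dense_iff_topologicalClosure_eq_top]
    exact e.dense_span
  exact congrFun (Continuous.ext_on hd h₁ h₂ hspan) x

lemma crossRel_of_basis (τ : TensorSquare H K) (J : H →SL[starRingEnd ℂ] H)
    (e : HilbertBasis ℕ ℂ H) (T Tc : K →L[ℂ] K)
    (h : ∀ i j k l : ℕ, ⟪τ.tmul (e i) (e j), Tc (τ.tmul (e k) (e l))⟫_ℂ =
      ⟪τ.tmul (e j) (J (e l)), T (τ.tmul (J (e i)) (e k))⟫_ℂ) :
    CrossRelB τ J J T Tc := by
  -- extend in the fourth variable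
  have h4 : ∀ (i j k : ℕ) (ψ₂ : H),
      ⟪τ.tmul (e i) (e j), Tc (τ.tmul (e k) ψ₂)⟫_ℂ =
      ⟪τ.tmul (e j) (J ψ₂), T (τ.tmul (J (e i)) (e k))⟫_ℂ := by
    intro i j k
    refine e.ext_dense id ?_ ?_ ?_ ?_ ?_ ?_ (h i j k)
    · exact Continuous.inner continuous_const
        (Tc.continuous.comp (τ.tmulL (e k)).continuous)
    · exact Continuous.inner ((τ.tmulL (e j)).continuous.comp J.continuous) continuous_const
    · intro x y; simp only [map_add, map_smulₛₗ, map_smul, TensorSquare.tmul_add_left, TensorSquare.tmul_add_right, TensorSquare.tmul_smul_left, TensorSquare.tmul_smul_right, inner_add_left, inner_add_right, inner_smul_left, inner_smul_right, id_eq, RingHom.id_apply, Complex.conj_conj]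
    · intro x y; simp only [map_add, map_smulₛₗ, map_smul, TensorSquare.tmul_add_left, TensorSquare.tmul_add_right, TensorSquare.tmul_smul_left, TensorSquare.tmul_smul_right, inner_add_left, inner_add_right, inner_smul_left, inner_smul_right, id_eq, RingHom.id_apply, Complex.conj_conj]
    · intro c x; simp only [map_add, map_smulₛₗ, map_smul, TensorSquare.tmul_add_left, TensorSquare.tmul_add_right, TensorSquare.tmul_smul_left, TensorSquare.tmul_smul_right, inner_add_left, inner_add_right, inner_smul_left, inner_smul_right, id_eq, RingHom.id_apply, Complex.conj_conj]
    · intro c x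
      simp only [map_add, map_smulₛₗ, map_smul, TensorSquare.tmul_add_left, TensorSquare.tmul_add_right, TensorSquare.tmul_smul_left, TensorSquare.tmul_smul_right, inner_add_left, inner_add_right, inner_smul_left, inner_smul_right, id_eq, RingHom.id_apply, Complex.conj_conj]
  -- third variable
  have h3 : ∀ (i j : ℕ) (ψ₁ ψ₂ : H),
      ⟪τ.tmul (e i) (e j), Tc (τ.tmul ψ₁ ψ₂)⟫_ℂ =
      ⟪τ.tmul (e j) (J ψ₂), T (τ.tmul (J (e i)) ψ₁)⟫_ℂ := by
    intro i j ψ₁ ψ₂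
    refine e.ext_dense (g₁ := fun z => ⟪τ.tmul (e i) (e j), Tc (τ.tmul z ψ₂)⟫_ℂ)
      (g₂ := fun z => ⟪τ.tmul (e j) (J ψ₂), T (τ.tmul (J (e i)) z)⟫_ℂ) id ?_ ?_ ?_ ?_ ?_ ?_
      (fun k => h4 i j k ψ₂) ψ₁
    · exact Continuous.inner continuous_const
        (Tc.continuous.comp (τ.tmulL.flip ψ₂).continuous)
    · exact Continuous.inner continuous_const
        (T.continuous.comp (τ.tmulL (J (e i))).continuous)
    · intro x y; simp only [map_add, map_smulₛₗ, map_smul, TensorSquare.tmul_add_left, TensorSquare.tmul_add_right, TensorSquare.tmul_smul_left, TensorSquare.tmul_smul_right, inner_add_left, inner_add_right, inner_smul_left, inner_smul_right, id_eq, RingHom.id_apply, Complex.conj_conj]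
    · intro x y; simp only [map_add, map_smulₛₗ, map_smul, TensorSquare.tmul_add_left, TensorSquare.tmul_add_right, TensorSquare.tmul_smul_left, TensorSquare.tmul_smul_right, inner_add_left, inner_add_right, inner_smul_left, inner_smul_right, id_eq, RingHom.id_apply, Complex.conj_conj]
    · intro c x; simp only [map_add, map_smulₛₗ, map_smul, TensorSquare.tmul_add_left, TensorSquare.tmul_add_right, TensorSquare.tmul_smul_left, TensorSquare.tmul_smul_right, inner_add_left, inner_add_right, inner_smul_left, inner_smul_right, id_eq, RingHom.id_apply, Complex.conj_conj]
    · intro c x; simp only [map_add, map_smulₛₗ, map_smul, TensorSquare.tmul_add_left, TensorSquare.tmul_add_right, TensorSquare.tmul_smul_left, TensorSquare.tmul_smul_right, inner_add_left, inner_add_right, inner_smul_left, inner_smul_right, id_eq, RingHom.id_apply, Complex.conj_conj]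
  -- second variable
  have h2 : ∀ (i : ℕ) (φ₂ ψ₁ ψ₂ : H),
      ⟪τ.tmul (e i) φ₂, Tc (τ.tmul ψ₁ ψ₂)⟫_ℂ =
      ⟪τ.tmul φ₂ (J ψ₂), T (τ.tmul (J (e i)) ψ₁)⟫_ℂ := by
    intro i φ₂ ψ₁ ψ₂
    refine e.ext_dense (g₁ := fun z => ⟪τ.tmul (e i) z, Tc (τ.tmul ψ₁ ψ₂)⟫_ℂ)
      (g₂ := fun z => ⟪τ.tmul z (J ψ₂), T (τ.tmul (J (e i)) ψ₁)⟫_ℂ) (starRingEnd ℂ) ?_ ?_ ?_ ?_ ?_ ?_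
      (fun j => h3 i j ψ₁ ψ₂) φ₂
    · exact Continuous.inner ((τ.tmulL (e i)).continuous) continuous_const
    · exact Continuous.inner ((τ.tmulL.flip (J ψ₂)).continuous) continuous_const
    · intro x y; simp only [map_add, map_smulₛₗ, map_smul, TensorSquare.tmul_add_left, TensorSquare.tmul_add_right, TensorSquare.tmul_smul_left, TensorSquare.tmul_smul_right, inner_add_left, inner_add_right, inner_smul_left, inner_smul_right, id_eq, RingHom.id_apply, Complex.conj_conj]
    · intro x y; simp only [map_add, map_smulₛₗ, map_smul, TensorSquare.tmul_add_left, TensorSquare.tmul_add_right, TensorSquare.tmul_smul_left, TensorSquare.tmul_smul_right, inner_add_left, inner_add_right, inner_smul_left, inner_smul_right, id_eq, RingHom.id_apply, Complex.conj_conj]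
    · intro c x; simp only [map_add, map_smulₛₗ, map_smul, TensorSquare.tmul_add_left, TensorSquare.tmul_add_right, TensorSquare.tmul_smul_left, TensorSquare.tmul_smul_right, inner_add_left, inner_add_right, inner_smul_left, inner_smul_right, id_eq, RingHom.id_apply, Complex.conj_conj]
    · intro c x; simp only [map_add, map_smulₛₗ, map_smul, TensorSquare.tmul_add_left, TensorSquare.tmul_add_right, TensorSquare.tmul_smul_left, TensorSquare.tmul_smul_right, inner_add_left, inner_add_right, inner_smul_left, inner_smul_right, id_eq, RingHom.id_apply, Complex.conj_conj]
  -- first variable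
  intro φ₁ φ₂ ψ₁ ψ₂
  refine e.ext_dense (g₁ := fun z => ⟪τ.tmul z φ₂, Tc (τ.tmul ψ₁ ψ₂)⟫_ℂ)
    (g₂ := fun z => ⟪τ.tmul φ₂ (J ψ₂), T (τ.tmul (J z) ψ₁)⟫_ℂ) (starRingEnd ℂ) ?_ ?_ ?_ ?_ ?_ ?_
    (fun i => h2 i φ₂ ψ₁ ψ₂) φ₁
  · exact Continuous.inner ((τ.tmulL.flip φ₂).continuous) continuous_const
  · exact Continuous.inner continuous_const
      (T.continuous.comp ((τ.tmulL.flip ψ₁).continuous.comp J.continuous))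
  · intro x y; simp only [map_add, map_smulₛₗ, map_smul, TensorSquare.tmul_add_left, TensorSquare.tmul_add_right, TensorSquare.tmul_smul_left, TensorSquare.tmul_smul_right, inner_add_left, inner_add_right, inner_smul_left, inner_smul_right, id_eq, RingHom.id_apply, Complex.conj_conj]
  · intro x y; simp only [map_add, map_smulₛₗ, map_smul, TensorSquare.tmul_add_left, TensorSquare.tmul_add_right, TensorSquare.tmul_smul_left, TensorSquare.tmul_smul_right, inner_add_left, inner_add_right, inner_smul_left, inner_smul_right, id_eq, RingHom.id_apply, Complex.conj_conj]
  · intro c x; simp only [map_add, map_smulₛₗ, map_smul, TensorSquare.tmul_add_left, TensorSquare.tmul_add_right, TensorSquare.tmul_smul_left, TensorSquare.tmul_smul_right, inner_add_left, inner_add_right, inner_smul_left, inner_smul_right, id_eq, RingHom.id_apply, Complex.conj_conj]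
  · intro c x
    simp only [map_add, map_smulₛₗ, map_smul, TensorSquare.tmul_add_left, TensorSquare.tmul_add_right, TensorSquare.tmul_smul_left, TensorSquare.tmul_smul_right, inner_add_left, inner_add_right, inner_smul_left, inner_smul_right, id_eq, RingHom.id_apply, Complex.conj_conj]

end Aux3

open scoped ENNReal NNReal

section Aux4
variable [NormedAddCommGroup H] [InnerProductSpace ℂ H] [CompleteSpace H]
  [NormedAddCommGroup K] [InnerProductSpace ℂ K] [CompleteSpace K]

lemma sq_bound_aux {S cc : ℝ} (hS : 0 ≤ S) (hcc : 0 ≤ cc) (h : S ≤ cc * Real.sqrt S) :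
    S ≤ cc ^ 2 := by
  nlinarith [mul_self_nonneg (cc - Real.sqrt S), Real.sq_sqrt hS, Real.sqrt_nonneg S]

lemma mul_conj_norm_sq (z : ℂ) : z * conj z = ((‖z‖ ^ 2 : ℝ) : ℂ) := by
  rw [Complex.mul_conj]
  norm_cast
  rw [Complex.normSq_eq_norm_sq]

lemma rpow_toReal_two (x : ℝ) : x ^ (2 : ℝ≥0∞).toReal = x ^ 2 := by
  rw [show ((2 : ℝ≥0∞).toReal) = ((2 : ℕ) : ℝ) by norm_num, Real.rpow_natCast]

set_option maxHeartbeats 2000000 in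
lemma exists_crossable (τ : TensorSquare H K) (e : HilbertBasis ℕ ℂ H) (T : K →L[ℂ] K)
    (c : ℝ) (hc0 : 0 < c)
    (hc : ∀ a b : (ℕ × ℕ) →₀ ℂ,
      ‖∑ p ∈ a.support, ∑ q ∈ b.support,
          a p * ⟪τ.tmul (e p.2) (e q.2), T (τ.tmul (e p.1) (e q.1))⟫_ℂ * b q‖
        ≤ c * Real.sqrt (∑ p ∈ a.support, ‖a p‖ ^ 2)
            * Real.sqrt (∑ q ∈ b.support, ‖b q‖ ^ 2)) :
    ∃ Tc : K →L[ℂ] K, ∀ p q : ℕ × ℕ,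
      ⟪τ.tmul (e p.1) (e p.2), Tc (τ.tmul (e q.1) (e q.2))⟫_ℂ
        = ⟪τ.tmul (e p.2) (e q.2), T (τ.tmul (e p.1) (e q.1))⟫_ℂ := by
  classical
  set F : HilbertBasis (ℕ × ℕ) ℂ K := τ.pairBasis e with hF
  set M : ℕ × ℕ → ℕ × ℕ → ℂ :=
    fun p q => ⟪τ.tmul (e p.2) (e q.2), T (τ.tmul (e p.1) (e q.1))⟫_ℂ with hM
  -- rows are square-summable
  have hrow : ∀ p : ℕ × ℕ, ∀ Q : Finset (ℕ × ℕ), ∑ q ∈ Q, ‖M p q‖ ^ 2 ≤ c ^ 2 := by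
    intro p Q
    set b : (ℕ × ℕ) →₀ ℂ := Finsupp.onFinset Q (fun q => if q ∈ Q then conj (M p q) else 0)
      (by intro q hq; by_contra hq'; simp [hq'] at hq) with hb
    have hbsub : b.support ⊆ Q := Finsupp.support_onFinset_subset
    have hbval : ∀ q ∈ Q, b q = conj (M p q) := fun q hq => by simp [hb, hq]
    have ha := hc (Finsupp.single p 1) b
    have hasupp : (Finsupp.single p (1:ℂ)).support = {p} :=
      Finsupp.support_single_ne_zero p one_ne_zero
    rw [hasupp] at ha
    simp only [Finset.sum_singleton, Finsupp.single_eq_same, one_mul] at ha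
    have hLHS : ∑ q ∈ b.support, M p q * b q
        = ((∑ q ∈ b.support, ‖M p q‖ ^ 2 : ℝ) : ℂ) := by
      push_cast
      refine Finset.sum_congr rfl fun q hq => ?_
      rw [hbval q (hbsub hq), mul_conj_norm_sq]
      push_cast
      ring
    have hast : ∑ q ∈ b.support, ‖b q‖ ^ 2 = ∑ q ∈ b.support, ‖M p q‖ ^ 2 := by
      refine Finset.sum_congr rfl fun q hq => ?_
      rw [hbval q (hbsub hq), RCLike.norm_conj]
    rw [hLHS, hast] at ha
    simp only [norm_one, Real.sqrt_one, one_pow, mul_one] at ha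
    have hnorm : ‖((∑ q ∈ b.support, ‖M p q‖ ^ 2 : ℝ) : ℂ)‖
        = ∑ q ∈ b.support, ‖M p q‖ ^ 2 := by
      rw [Complex.norm_real, Real.norm_of_nonneg]
      positivity
    rw [hnorm] at ha
    have hS' : ∑ q ∈ b.support, ‖M p q‖ ^ 2 ≤ c ^ 2 :=
      sq_bound_aux (by positivity) hc0.le ha
    calc ∑ q ∈ Q, ‖M p q‖ ^ 2 = ∑ q ∈ b.support, ‖M p q‖ ^ 2 := by
          refine (Finset.sum_subset hbsub fun q hq hq' => ?_).symm
          have : b q = 0 := Finsupp.notMem_support_iff.mp hq'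
          rw [hbval q hq] at this
          have : M p q = 0 := by
            have := congrArg conj this
            simpa using this
          simp [this]
      _ ≤ c ^ 2 := hS'
  -- the rows as elements of ℓ²
  set r : ℕ × ℕ → lp (fun _ : ℕ × ℕ => ℂ) 2 :=
    fun p => ⟨fun q => conj (M p q), memℓp_gen' (C := c ^ 2) (fun s => by
      calc ∑ q ∈ s, ‖conj (M p q)‖ ^ (2 : ℝ≥0∞).toReal
          = ∑ q ∈ s, ‖M p q‖ ^ 2 := by
            refine Finset.sum_congr rfl fun q _ => ?_
            rw [rpow_toReal_two, RCLike.norm_conj]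
        _ ≤ c ^ 2 := hrow p s)⟩ with hr
  set y : K → (ℕ × ℕ) → ℂ := fun x p => ⟪r p, F.repr x⟫_ℂ with hy
  have hyHasSum : ∀ (x : K) (p : ℕ × ℕ),
      HasSum (fun q => M p q * F.repr x q) (y x p) := by
    intro x p
    have h1 := lp.hasSum_inner (𝕜 := ℂ) (r p) (F.repr x)
    refine h1.congr_fun fun q => ?_
    rw [RCLike.inner_apply]
    simp [hr]
    ring
  -- key quantitative bound
  have key : ∀ (x : K) (P : Finset (ℕ × ℕ)), ∑ p ∈ P, ‖y x p‖ ^ 2 ≤ (c * ‖x‖) ^ 2 := by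
    intro x P
    set S := ∑ p ∈ P, ‖y x p‖ ^ 2 with hSdef
    have hS0 : 0 ≤ S := by positivity
    set a : (ℕ × ℕ) →₀ ℂ := Finsupp.onFinset P (fun p => if p ∈ P then conj (y x p) else 0)
      (by intro p hp; by_contra hp'; simp [hp'] at hp) with haa
    have hasub : a.support ⊆ P := Finsupp.support_onFinset_subset
    have haval : ∀ p ∈ P, a p = conj (y x p) := fun p hp => by simp [haa, hp]
    -- the partial double sums tend to S
    have hlim : Filter.Tendsto
        (fun Q : Finset (ℕ × ℕ) => ∑ p ∈ P, conj (y x p) * ∑ q ∈ Q, M p q * F.repr x q)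
        Filter.atTop (nhds ((S : ℝ) : ℂ)) := by
      have h1 : HasSum (fun q => ∑ p ∈ P, conj (y x p) * (M p q * F.repr x q))
          (∑ p ∈ P, conj (y x p) * y x p) :=
        hasSum_sum fun p _ => (hyHasSum x p).mul_left _
      have h2 : (∑ p ∈ P, conj (y x p) * y x p) = ((S : ℝ) : ℂ) := by
        rw [hSdef]
        push_cast
        refine Finset.sum_congr rfl fun p _ => ?_
        rw [mul_comm, mul_conj_norm_sq]
        push_cast
        ring
      rw [← h2]
      have h3 : Filter.Tendsto
          (fun Q : Finset (ℕ × ℕ) => ∑ q ∈ Q, ∑ p ∈ P, conj (y x p) * (M p q * F.repr x q))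
          Filter.atTop (nhds (∑ p ∈ P, conj (y x p) * y x p)) := h1
      refine h3.congr fun Q => ?_
      rw [Finset.sum_comm]
      exact Finset.sum_congr rfl fun p _ => by rw [Finset.mul_sum]
    -- uniform bound on partial sums
    have hbound : ∀ Q : Finset (ℕ × ℕ),
        ‖∑ p ∈ P, conj (y x p) * ∑ q ∈ Q, M p q * F.repr x q‖ ≤ c * Real.sqrt S * ‖x‖ := by
      intro Q
      set b : (ℕ × ℕ) →₀ ℂ := Finsupp.onFinset Q (fun q => if q ∈ Q then F.repr x q else 0)
        (by intro q hq; by_contra hq'; simp [hq'] at hq) with hbb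
      have hbsub : b.support ⊆ Q := Finsupp.support_onFinset_subset
      have hbval : ∀ q ∈ Q, b q = F.repr x q := fun q hq => by simp [hbb, hq]
      have ha := hc a b
      have e1 : ∀ p : ℕ × ℕ, ∑ q ∈ b.support, a p * M p q * b q = ∑ q ∈ Q, a p * M p q * b q :=
        fun p => Finset.sum_subset hbsub (fun q _ hq => by
          rw [Finsupp.notMem_support_iff.mp hq, mul_zero])
      have e2 : ∑ p ∈ a.support, ∑ q ∈ Q, a p * M p q * b q
          = ∑ p ∈ P, ∑ q ∈ Q, a p * M p q * b q :=
        Finset.sum_subset hasub (fun p _ hp => by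
          simp [Finsupp.notMem_support_iff.mp hp])
      have e3 : ∑ p ∈ P, ∑ q ∈ Q, a p * M p q * b q
          = ∑ p ∈ P, conj (y x p) * ∑ q ∈ Q, M p q * F.repr x q := by
        refine Finset.sum_congr rfl fun p hp => ?_
        rw [Finset.mul_sum]
        refine Finset.sum_congr rfl fun q hq => ?_
        rw [haval p hp, hbval q hq]
        ring
      have heq : ∑ p ∈ a.support, ∑ q ∈ b.support, a p * M p q * b q
          = ∑ p ∈ P, conj (y x p) * ∑ q ∈ Q, M p q * F.repr x q := by
        rw [← e3, ← e2]
        exact Finset.sum_congr rfl fun p _ => e1 p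
      rw [heq] at ha
      -- bound the two square roots
      have sa : ∑ p ∈ a.support, ‖a p‖ ^ 2 ≤ S := by
        have : ∑ p ∈ a.support, ‖a p‖ ^ 2 = ∑ p ∈ a.support, ‖y x p‖ ^ 2 := by
          refine Finset.sum_congr rfl fun p hp => ?_
          rw [haval p (hasub hp), RCLike.norm_conj]
        rw [this, hSdef]
        exact Finset.sum_le_sum_of_subset_of_nonneg hasub (fun p _ _ => by positivity)
      have sb : ∑ q ∈ b.support, ‖b q‖ ^ 2 ≤ ‖x‖ ^ 2 := by
        have h4 : ∑ q ∈ b.support, ‖b q‖ ^ 2 = ∑ q ∈ b.support, ‖F.repr x q‖ ^ 2 := by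
          refine Finset.sum_congr rfl fun q hq => ?_
          rw [hbval q (hbsub hq)]
        have h5 := lp.sum_rpow_le_norm_rpow (p := 2)
          (by rw [ENNReal.toReal_ofNat]; norm_num) (F.repr x) b.support
        simp only [rpow_toReal_two] at h5
        rw [h4, F.repr.norm_map x] at *
        exact h5
      calc ‖∑ p ∈ P, conj (y x p) * ∑ q ∈ Q, M p q * F.repr x q‖
          ≤ c * Real.sqrt (∑ p ∈ a.support, ‖a p‖ ^ 2)
              * Real.sqrt (∑ q ∈ b.support, ‖b q‖ ^ 2) := ha
        _ ≤ c * Real.sqrt S * ‖x‖ := by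
            have r1 : Real.sqrt (∑ p ∈ a.support, ‖a p‖ ^ 2) ≤ Real.sqrt S :=
              Real.sqrt_le_sqrt sa
            have r2 : Real.sqrt (∑ q ∈ b.support, ‖b q‖ ^ 2) ≤ ‖x‖ := by
              have := Real.sqrt_le_sqrt sb
              rwa [Real.sqrt_sq (norm_nonneg x)] at this
            have h6 : (0:ℝ) ≤ c * Real.sqrt (∑ p ∈ a.support, ‖a p‖ ^ 2) := by positivity
            calc c * Real.sqrt (∑ p ∈ a.support, ‖a p‖ ^ 2)
                  * Real.sqrt (∑ q ∈ b.support, ‖b q‖ ^ 2)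
                ≤ c * Real.sqrt (∑ p ∈ a.support, ‖a p‖ ^ 2) * ‖x‖ := by
                  exact mul_le_mul_of_nonneg_left r2 h6
              _ ≤ c * Real.sqrt S * ‖x‖ := by
                  have : c * Real.sqrt (∑ p ∈ a.support, ‖a p‖ ^ 2) ≤ c * Real.sqrt S :=
                    mul_le_mul_of_nonneg_left r1 hc0.le
                  exact mul_le_mul_of_nonneg_right this (norm_nonneg x)
    have hfin : ‖((S : ℝ) : ℂ)‖ ≤ c * Real.sqrt S * ‖x‖ :=
      le_of_tendsto hlim.norm (Filter.Eventually.of_forall hbound)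
    rw [Complex.norm_real, Real.norm_of_nonneg hS0] at hfin
    refine sq_bound_aux hS0 (by positivity) ?_
    calc S ≤ c * Real.sqrt S * ‖x‖ := hfin
      _ = (c * ‖x‖) * Real.sqrt S := by ring
  -- the candidate operator
  have hmem : ∀ x : K, Memℓp (y x) 2 := fun x =>
    memℓp_gen' (C := (c * ‖x‖) ^ 2) (fun s => by
      calc ∑ p ∈ s, ‖y x p‖ ^ (2 : ℝ≥0∞).toReal = ∑ p ∈ s, ‖y x p‖ ^ 2 :=
            Finset.sum_congr rfl fun p _ => rpow_toReal_two _
        _ ≤ (c * ‖x‖) ^ 2 := key x s)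
  set Y : K → lp (fun _ : ℕ × ℕ => ℂ) 2 := fun x => ⟨y x, hmem x⟩ with hY
  have hYcoe : ∀ (x : K) (p : ℕ × ℕ), (Y x : (ℕ × ℕ) → ℂ) p = y x p := fun x p => rfl
  set Tc0 : K →ₗ[ℂ] K :=
    { toFun := fun x => F.repr.symm (Y x)
      map_add' := by
        intro x x'
        have : Y (x + x') = Y x + Y x' := by
          apply lp.ext
          funext p
          rw [lp.coeFn_add]
          show y (x + x') p = y x p + y x' p
          rw [hy]
          simp only [map_add, inner_add_right]
        show F.repr.symm (Y (x + x')) = F.repr.symm (Y x) + F.repr.symm (Y x')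
        rw [this, map_add]
      map_smul' := by
        intro m x
        have : Y (m • x) = m • Y x := by
          apply lp.ext
          funext p
          rw [lp.coeFn_smul]
          show y (m • x) p = m • y x p
          rw [hy]
          simp only [map_smul, inner_smul_right, smul_eq_mul]
        show F.repr.symm (Y (m • x)) = m • F.repr.symm (Y x)
        rw [this, map_smul] } with hTc0
  have hTc0bound : ∀ x, ‖Tc0 x‖ ≤ c * ‖x‖ := by
    intro x
    have h7 : Tc0 x = F.repr.symm (Y x) := rfl
    rw [h7, LinearIsometryEquiv.norm_map]
    refine lp.norm_le_of_forall_sum_le (by rw [ENNReal.toReal_ofNat]; norm_num)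
      (by positivity) (fun s => ?_)
    calc ∑ p ∈ s, ‖(Y x : (ℕ × ℕ) → ℂ) p‖ ^ (2 : ℝ≥0∞).toReal
        = ∑ p ∈ s, ‖y x p‖ ^ 2 := Finset.sum_congr rfl fun p _ => by
          rw [hYcoe, rpow_toReal_two]
      _ ≤ (c * ‖x‖) ^ 2 := key x s
      _ = (c * ‖x‖) ^ (2 : ℝ≥0∞).toReal := (rpow_toReal_two _).symm
  refine ⟨Tc0.mkContinuous c hTc0bound, fun p q => ?_⟩
  have h1 : τ.tmul (e p.1) (e p.2) = F p := (τ.pairBasis_apply e p).symm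
  have h2 : τ.tmul (e q.1) (e q.2) = F q := (τ.pairBasis_apply e q).symm
  rw [h1, h2]
  have h8 : (Tc0.mkContinuous c hTc0bound) (F q) = F.repr.symm (Y (F q)) := rfl
  rw [h8, ← F.repr_apply_apply, LinearIsometryEquiv.apply_symm_apply]
  show y (F q) p = M p q
  rw [hy]
  show ⟪r p, F.repr (F q)⟫_ℂ = M p q
  rw [F.repr_self, lp.inner_single_right, RCLike.inner_apply]
  show 1 * conj (conj (M p q)) = M p q
  simp

end Aux4

end MyAux

/-- Let `J` be an antiunitary involution and `{e_n}` an orthonormal basis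
with `J e_n = e_n`. A bounded `T` on `H ⊗ H` is `J`-crossable iff the quadruple sums
`Σ a_{ij} T^{jl}_{ik} b_{kl}` define a bounded bilinear form on `ℓ²(ℕ²)` (tested on finitely
supported sequences); moreover, then `Cross_J(T)^{ij}_{kl} = T^{jl}_{ik}`. -/
theorem crossable_iff_matrix_bound
    [NormedAddCommGroup H] [InnerProductSpace ℂ H] [CompleteSpace H]
    [NormedAddCommGroup K] [InnerProductSpace ℂ K] [CompleteSpace K]
    (τ : TensorSquare H K)
    (J : H →SL[starRingEnd ℂ] H)
    (hJinv : ∀ x : H, J (J x) = x)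
    (hJanti : ∀ x y : H, ⟪J x, J y⟫_ℂ = ⟪y, x⟫_ℂ)
    (e : HilbertBasis ℕ ℂ H) (hJe : ∀ n, J (e n) = e n)
    (T : K →L[ℂ] K) :
    ((∃ Tc : K →L[ℂ] K, CrossRelB τ J J T Tc) ↔
      ∃ c : ℝ, 0 < c ∧ ∀ a b : (ℕ × ℕ) →₀ ℂ,
        ‖∑ p ∈ a.support, ∑ q ∈ b.support,
            a p * ⟪τ.tmul (e p.2) (e q.2), T (τ.tmul (e p.1) (e q.1))⟫_ℂ * b q‖
          ≤ c * Real.sqrt (∑ p ∈ a.support, ‖a p‖ ^ 2)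
              * Real.sqrt (∑ q ∈ b.support, ‖b q‖ ^ 2)) ∧
    (∀ Tc : K →L[ℂ] K, CrossRelB τ J J T Tc → ∀ i j k l : ℕ,
      ⟪τ.tmul (e i) (e j), Tc (τ.tmul (e k) (e l))⟫_ℂ
        = ⟪τ.tmul (e j) (e l), T (τ.tmul (e i) (e k))⟫_ℂ) := by
  have hon := τ.orthonormal_pair e
  refine ⟨⟨?_, ?_⟩, ?_⟩
  · -- crossable implies bounded matrix form
    rintro ⟨Tc, hTc⟩
    refine ⟨‖Tc‖ + 1, by positivity, ?_⟩
    intro a b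
    set x : K := ∑ p ∈ a.support, conj (a p) • τ.tmul (e p.1) (e p.2) with hx
    set yv : K := ∑ q ∈ b.support, b q • τ.tmul (e q.1) (e q.2) with hyv
    have hsum : ∑ p ∈ a.support, ∑ q ∈ b.support,
        a p * ⟪τ.tmul (e p.2) (e q.2), T (τ.tmul (e p.1) (e q.1))⟫_ℂ * b q
        = ⟪x, Tc yv⟫_ℂ := by
      rw [hx, hyv, sum_inner]
      refine Finset.sum_congr rfl fun p _ => ?_
      rw [inner_smul_left, map_sum, inner_sum, Finset.mul_sum]
      refine Finset.sum_congr rfl fun q _ => ?_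
      rw [map_smul, inner_smul_right]
      have h9 := hTc (e p.1) (e p.2) (e q.1) (e q.2)
      rw [hJe, hJe] at h9
      rw [← h9, Complex.conj_conj]
      ring
    have hxn : ‖x‖ = Real.sqrt (∑ p ∈ a.support, ‖a p‖ ^ 2) := by
      have h2 : ⟪x, x⟫_ℂ = ∑ p ∈ a.support, conj (conj (a p)) * (conj (a p)) := by
        rw [hx]; exact hon.inner_sum _ _ _
      have h2' : ⟪x, x⟫_ℂ = ((∑ p ∈ a.support, ‖a p‖ ^ 2 : ℝ) : ℂ) := by
        rw [h2]; push_cast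
        refine Finset.sum_congr rfl fun p _ => ?_
        rw [Complex.conj_conj, mul_conj_norm_sq]
        push_cast; ring
      have h3 : ‖x‖ ^ 2 = ∑ p ∈ a.support, ‖a p‖ ^ 2 := by
        rw [@norm_sq_eq_re_inner ℂ, h2']
        exact Complex.ofReal_re _
      rw [← h3, Real.sqrt_sq (norm_nonneg _)]
    have hyn : ‖yv‖ = Real.sqrt (∑ q ∈ b.support, ‖b q‖ ^ 2) := by
      have h2 : ⟪yv, yv⟫_ℂ = ∑ q ∈ b.support, conj (b q) * (b q) := by
        rw [hyv]; exact hon.inner_sum _ _ _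
      have h2' : ⟪yv, yv⟫_ℂ = ((∑ q ∈ b.support, ‖b q‖ ^ 2 : ℝ) : ℂ) := by
        rw [h2]; push_cast
        refine Finset.sum_congr rfl fun q _ => ?_
        rw [mul_comm, mul_conj_norm_sq]
        push_cast; ring
      have h3 : ‖yv‖ ^ 2 = ∑ q ∈ b.support, ‖b q‖ ^ 2 := by
        rw [@norm_sq_eq_re_inner ℂ, h2']
        exact Complex.ofReal_re _
      rw [← h3, Real.sqrt_sq (norm_nonneg _)]
    rw [hsum, ← hxn, ← hyn]
    calc ‖⟪x, Tc yv⟫_ℂ‖ ≤ ‖x‖ * ‖Tc yv‖ := norm_inner_le_norm x (Tc yv)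
      _ ≤ ‖x‖ * (‖Tc‖ * ‖yv‖) :=
          mul_le_mul_of_nonneg_left (Tc.le_opNorm yv) (norm_nonneg x)
      _ ≤ (‖Tc‖ + 1) * ‖x‖ * ‖yv‖ := by
          nlinarith [norm_nonneg x, norm_nonneg yv, norm_nonneg Tc]
  · -- bounded matrix form implies crossable
    rintro ⟨c, hc0, hc⟩
    obtain ⟨Tc, hTc⟩ := exists_crossable τ e T c hc0 hc
    refine ⟨Tc, crossRel_of_basis τ J e T Tc fun i j k l => ?_⟩
    rw [hJe, hJe]
    exact hTc (i, j) (k, l)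
  · -- matrix elements of the crossed operator
    intro Tc hTc i j k l
    have h9 := hTc (e i) (e j) (e k) (e l)
    rw [hJe, hJe] at h9
    exact h9
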